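/- Let μ be a Borel measure on ℝ that is finite on compact sets, and let H ⊆ ℝ be μ-measurable with inf H > −∞ and μ(H) = +∞. Then lim_{y→+∞} M^μ(H ∩ (−∞, y]) = +∞; that is, (∫_{H ∩ (−∞, y]} x dμ(x))/μ(H ∩ (−∞, y]) → +∞ as y → +∞ (note that μ(H ∩ (−∞, y]) is positive and finite for all sufficiently large y). -/

import Mathlib

open Set Filter Topology Bornology

theorem stmt_18 (μ : MeasureTheory.Measure ℝ)
    [MeasureTheory.IsFiniteMeasureOnCompacts μ]
    (H : Set ℝ) (hHm : MeasurableSet H) (hbb : BddBelow H) (hinf : μ H = ⊤) :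
    (∀ᶠ y in atTop, 0 < μ (H ∩ Iic y) ∧ μ (H ∩ Iic y) < ⊤) ∧
    Tendsto (fun y : ℝ => (∫ t in H ∩ Iic y, t ∂μ) / (μ (H ∩ Iic y)).toReal)
      atTop atTop := by
  obtain ⟨a, ha⟩ := hbb
  have hsubIcc : ∀ y : ℝ, H ∩ Iic y ⊆ Icc a y := by
    rintro y x ⟨hx, hxy⟩; exact ⟨ha hx, hxy⟩
  have hfin : ∀ y : ℝ, μ (H ∩ Iic y) < ⊤ := fun y =>
    lt_of_le_of_lt (MeasureTheory.measure_mono (hsubIcc y)) isCompact_Icc.measure_lt_top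
  have hmeas : ∀ y : ℝ, MeasurableSet (H ∩ Iic y) := fun y =>
    hHm.inter measurableSet_Iic
  have hint : ∀ y : ℝ, MeasureTheory.IntegrableOn id (H ∩ Iic y) μ := fun y =>
    ((continuous_id.continuousOn.integrableOn_compact
      (isCompact_Icc (a := a) (b := y)))).mono_set (hsubIcc y)
  have hmono : ∀ ⦃y z : ℝ⦄, y ≤ z → μ (H ∩ Iic y) ≤ μ (H ∩ Iic z) := fun y z h =>
    MeasureTheory.measure_mono (inter_subset_inter_right _ (Iic_subset_Iic.mpr h))
  -- the measure tends to ⊤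
  have hsup : ∀ M : ENNReal, M ≠ ⊤ → ∀ᶠ y in atTop, M < μ (H ∩ Iic y) := by
    intro M hM
    have hU : (⋃ n : ℕ, H ∩ Iic (n : ℝ)) = H := by
      rw [← inter_iUnion]
      have : (⋃ n : ℕ, Iic (n : ℝ)) = univ := by
        ext x
        simp only [mem_iUnion, mem_Iic, mem_univ, iff_true]
        exact exists_nat_ge x
      rw [this, inter_univ]
    have hdir : Directed (· ⊆ ·) (fun n : ℕ => H ∩ Iic (n : ℝ)) := by
      refine Monotone.directed_le fun m n hmn => ?_
      exact inter_subset_inter_right _ (Iic_subset_Iic.mpr (by exact_mod_cast hmn))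
    have hiSup : (⨆ n : ℕ, μ (H ∩ Iic (n : ℝ))) = ⊤ := by
      rw [← hdir.measure_iUnion, hU, hinf]
    have : M < ⨆ n : ℕ, μ (H ∩ Iic (n : ℝ)) := hiSup ▸ hM.lt_top
    obtain ⟨n, hn⟩ := lt_iSup_iff.mp this
    filter_upwards [eventually_ge_atTop (n : ℝ)] with y hy
    exact lt_of_lt_of_le hn (hmono hy)
  have htoReal : ∀ C : ℝ, ∀ᶠ y in atTop, C ≤ (μ (H ∩ Iic y)).toReal := by
    intro C
    filter_upwards [hsup (ENNReal.ofReal C) ENNReal.ofReal_ne_top] with y hy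
    rcases le_or_gt C 0 with hC | hC
    · exact hC.trans ENNReal.toReal_nonneg
    · exact le_of_lt ((ENNReal.ofReal_lt_iff_lt_toReal hC.le (hfin y).ne).mp hy)
  constructor
  · filter_upwards [hsup 0 (by simp)] with y hy
    exact ⟨hy, hfin y⟩
  · rw [tendsto_atTop]
    intro b
    set c : ℝ := b + 1 with hc
    set K : ℝ := (∫ t in H ∩ Iic c, t ∂μ) - c * (μ (H ∩ Iic c)).toReal with hK
    filter_upwards [eventually_ge_atTop c, htoReal (max 1 |K|), hsup 0 (by simp)]
      with y hy hT hpos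
    set T : ℝ := (μ (H ∩ Iic y)).toReal with hTdef
    have hT1 : (1 : ℝ) ≤ T := le_trans (le_max_left _ _) hT
    have hTK : |K| ≤ T := le_trans (le_max_right _ _) hT
    have hT0 : 0 < T := lt_of_lt_of_le one_pos hT1
    -- split the set
    have hdisj : Disjoint (H ∩ Iic c) (H ∩ Ioc c y) :=
      (Iic_disjoint_Ioc le_rfl).mono inter_subset_right inter_subset_right
    have hunion : (H ∩ Iic c) ∪ (H ∩ Ioc c y) = H ∩ Iic y := by
      rw [← inter_union_distrib_left, Iic_union_Ioc_eq_Iic hy]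
    have hmIoc : MeasurableSet (H ∩ Ioc c y) := hHm.inter measurableSet_Ioc
    have hfinIoc : μ (H ∩ Ioc c y) < ⊤ :=
      lt_of_le_of_lt (MeasureTheory.measure_mono (inter_subset_inter_right _ Ioc_subset_Iic_self
        |>.trans (inter_subset_inter_right _ (Iic_subset_Iic.mpr le_rfl)))) (hfin y)
    have hintIoc : MeasureTheory.IntegrableOn id (H ∩ Ioc c y) μ :=
      (hint y).mono_set (hunion ▸ subset_union_right)
    -- measure additivity
    have hmeasadd : μ (H ∩ Iic y) = μ (H ∩ Iic c) + μ (H ∩ Ioc c y) := by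
      rw [← hunion, MeasureTheory.measure_union hdisj hmIoc]
    have hTadd : T = (μ (H ∩ Iic c)).toReal + (μ (H ∩ Ioc c y)).toReal := by
      rw [hTdef, hmeasadd, ENNReal.toReal_add (hfin c).ne hfinIoc.ne]
    -- integral split
    have hIsplit : (∫ t in H ∩ Iic y, t ∂μ)
        = (∫ t in H ∩ Iic c, t ∂μ) + ∫ t in H ∩ Ioc c y, t ∂μ := by
      rw [← hunion]
      exact MeasureTheory.setIntegral_union hdisj hmIoc (hint c) hintIoc
    have hJ : c * (μ (H ∩ Ioc c y)).toReal ≤ ∫ t in H ∩ Ioc c y, t ∂μ := by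
      refine le_of_eq_of_le ?_ (MeasureTheory.setIntegral_ge_of_const_le hmIoc hfinIoc.ne ?_ hintIoc :
        μ.real (H ∩ Ioc c y) • c ≤ _)
      · rw [smul_eq_mul, mul_comm]; rfl
      rintro x ⟨-, hx1, -⟩
      exact hx1.le
    have hIlow : c * T + K ≤ ∫ t in H ∩ Iic y, t ∂μ := by
      rw [hIsplit, hTadd, hK]
      nlinarith [hJ]
    have hmain : c + K / T ≤ (∫ t in H ∩ Iic y, t ∂μ) / T := by
      have h1 : (c * T + K) / T ≤ (∫ t in H ∩ Iic y, t ∂μ) / T :=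
        (div_le_div_iff_of_pos_right hT0).mpr hIlow
      have h2 : (c * T + K) / T = c + K / T := by field_simp
      linarith
    have hKT : -1 ≤ K / T := by
      rw [neg_le, ← neg_div]
      exact (div_le_one hT0).mpr (le_trans (neg_le_abs K) hTK)
    calc b = c + (-1) := by rw [hc]; ring
    _ ≤ c + K / T := by linarith
    _ ≤ _ := hmain
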